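/- Let α and β be nonempty finite types and let ρ₀, ρ₁, Q₀, Q₁ be positive semidefinite complex matrices indexed by α × β, and let Y be a Hermitian matrix indexed by α × β such that Y − Q₀^{T_B} − ρ₀/2 and Y − Q₁^{T_B} − ρ₁/2 are positive semidefinite. Then for all positive semidefinite matrices Π₀, Π₁ with Π₀ + Π₁ = 1 such that Π₀^{T_B} and Π₁^{T_B} are positive semidefinite, the real part of (1/2)·(Tr(Π₀·ρ₀) + Tr(Π₁·ρ₁)) is at most the real part of Tr(Y). -/

import Mathlib

open Matrix
open scoped ComplexOrder

/-- Partial transpose on the second tensor factor: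
`M^{T_B}((i,j),(k,l)) = M((i,l),(k,j))`. -/
def ptB {α β : Type*} (M : Matrix (α × β) (α × β) ℂ) : Matrix (α × β) (α × β) ℂ :=
  Matrix.of fun p q => M (p.1, q.2) (q.1, p.2)

lemma trace_mul_re_nonneg {n : Type*} [Fintype n] [DecidableEq n]
    {A B : Matrix n n ℂ} (hA : A.PosSemidef) (hB : B.PosSemidef) :
    0 ≤ ((A * B).trace).re := by
  obtain ⟨X, rfl⟩ : ∃ X : Matrix n n ℂ, A = Xᴴ * X := by
    open scoped MatrixOrder in
    obtain ⟨X, hX⟩ := CStarAlgebra.nonneg_iff_eq_star_mul_self.mp hA.nonneg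
    exact ⟨X, hX⟩
  have h : (Xᴴ * X * B).trace = (X * B * Xᴴ).trace := by
    rw [Matrix.mul_assoc, Matrix.trace_mul_comm, Matrix.mul_assoc]
  rw [h]
  have hM : (X * B * Xᴴ).PosSemidef := hB.mul_mul_conjTranspose_same X
  rw [Matrix.trace, Complex.re_sum]
  apply Finset.sum_nonneg
  intro i _
  have := hM.re_dotProduct_nonneg (Pi.single i 1)
  simpa [dotProduct, Matrix.mulVec, Pi.single_apply, Matrix.diag] using this

lemma trace_mul_ptB {α β : Type*} [Fintype α] [Fintype β]
    (A B : Matrix (α × β) (α × β) ℂ) :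
    (A * ptB B).trace = (ptB A * B).trace := by
  simp only [Matrix.trace, Matrix.diag, Matrix.mul_apply, ptB, Matrix.of_apply]
  rw [← Finset.sum_product', ← Finset.sum_product']
  exact Fintype.sum_equiv
    ⟨fun x => ((x.1.1, x.2.2), (x.2.1, x.1.2)),
     fun x => ((x.1.1, x.2.2), (x.2.1, x.1.2)),
     fun x => rfl, fun x => rfl⟩ _ _ (fun x => rfl)

/-- Weak duality for the PPT state-discrimination SDP: any feasible dual solution
`(Y, Q₀, Q₁)` upper bounds the success probability of any PPT measurement `(P₀, P₁)`. -/
theorem ppt_weak_duality {α β : Type*} [Fintype α] [Fintype β] [Nonempty α] [Nonempty β]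
    [DecidableEq α] [DecidableEq β]
    (ρ₀ ρ₁ Q₀ Q₁ : Matrix (α × β) (α × β) ℂ) (Y : Matrix (α × β) (α × β) ℂ)
    (hρ₀ : ρ₀.PosSemidef) (hρ₁ : ρ₁.PosSemidef)
    (hQ₀ : Q₀.PosSemidef) (hQ₁ : Q₁.PosSemidef)
    (hY : Y.IsHermitian)
    (hfeas₀ : (Y - ptB Q₀ - (1/2 : ℂ) • ρ₀).PosSemidef)
    (hfeas₁ : (Y - ptB Q₁ - (1/2 : ℂ) • ρ₁).PosSemidef) :
    ∀ P₀ P₁ : Matrix (α × β) (α × β) ℂ,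
      P₀.PosSemidef → P₁.PosSemidef → P₀ + P₁ = 1 →
      (ptB P₀).PosSemidef → (ptB P₁).PosSemidef →
      ((1/2 : ℂ) * ((P₀ * ρ₀).trace + (P₁ * ρ₁).trace)).re ≤ Y.trace.re := by
  intro P₀ P₁ hP₀ hP₁ hsum hpt₀ hpt₁
  set M₀ : Matrix (α × β) (α × β) ℂ := Y - ptB Q₀ - (1/2 : ℂ) • ρ₀ with hM₀
  set M₁ : Matrix (α × β) (α × β) ℂ := Y - ptB Q₁ - (1/2 : ℂ) • ρ₁ with hM₁
  have e0 : (P₀ * M₀).trace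
      = (P₀ * Y).trace - (P₀ * ptB Q₀).trace - (1/2 : ℂ) * (P₀ * ρ₀).trace := by
    rw [hM₀]
    simp [Matrix.mul_sub, Matrix.trace_sub, Matrix.mul_smul, Matrix.trace_smul, smul_eq_mul]
  have e1 : (P₁ * M₁).trace
      = (P₁ * Y).trace - (P₁ * ptB Q₁).trace - (1/2 : ℂ) * (P₁ * ρ₁).trace := by
    rw [hM₁]
    simp [Matrix.mul_sub, Matrix.trace_sub, Matrix.mul_smul, Matrix.trace_smul, smul_eq_mul]
  have hYtr : (P₀ * Y).trace + (P₁ * Y).trace = Y.trace := by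
    rw [← Matrix.trace_add, ← Matrix.add_mul, hsum, Matrix.one_mul]
  have t0 : (P₀ * ptB Q₀).trace = (ptB P₀ * Q₀).trace := trace_mul_ptB P₀ Q₀
  have t1 : (P₁ * ptB Q₁).trace = (ptB P₁ * Q₁).trace := trace_mul_ptB P₁ Q₁
  have key : Y.trace = (P₀ * M₀).trace + (P₁ * M₁).trace
      + (ptB P₀ * Q₀).trace + (ptB P₁ * Q₁).trace
      + (1/2 : ℂ) * ((P₀ * ρ₀).trace + (P₁ * ρ₁).trace) := by
    rw [e0, e1, ← t0, ← t1, ← hYtr]; ring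
  have n0 : 0 ≤ ((P₀ * M₀).trace).re := trace_mul_re_nonneg hP₀ hfeas₀
  have n1 : 0 ≤ ((P₁ * M₁).trace).re := trace_mul_re_nonneg hP₁ hfeas₁
  have n2 : 0 ≤ ((ptB P₀ * Q₀).trace).re := trace_mul_re_nonneg hpt₀ hQ₀
  have n3 : 0 ≤ ((ptB P₁ * Q₁).trace).re := trace_mul_re_nonneg hpt₁ hQ₁
  rw [key]
  simp only [Complex.add_re]
  linarith
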